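/- Let δ > τ > 0 and r > 0, and define E(t) := |½ u'(t) + τ u''(t)|² + (τ/(δ+τ)) r² |u(t) + (δ+τ) u'(t)|² + ((δ-τ)/(2(δ+τ))) r² |u(t)|² + ¼ |u'(t)|² for a C³ function u : [0,∞) → ℂ satisfying τ u''' + u'' + r² u + (δ+τ) r² u' = f. Then (1/2) E'(t) = -(τ/2)|u''(t)|² - ((δ-τ)/2) r² |u'(t)|² + Re( f(t) · conj(½ u'(t) + τ u''(t)) ). -/

import Mathlib

theorem hdnsq {g : ℝ → ℂ} {g' : ℂ} {t : ℝ} (h : HasDerivAt g g' t) :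
    HasDerivAt (fun s => ‖g s‖^2) (2 * (g' * (starRingEnd ℂ) (g t)).re) t := by
  have hre : HasDerivAt (fun s => (g s).re) g'.re t :=
    Complex.reCLM.hasFDerivAt.comp_hasDerivAt t h
  have him : HasDerivAt (fun s => (g s).im) g'.im t :=
    Complex.imCLM.hasFDerivAt.comp_hasDerivAt t h
  have h2 := (hre.pow 2).add (him.pow 2)
  convert h2 using 1
  · rfl
  · rfl
  · funext s
    rw [← Complex.normSq_eq_norm_sq, Complex.normSq_apply, Pi.add_apply, Pi.pow_apply, Pi.pow_apply]; ring
  · simp [Complex.mul_re]; ring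

theorem stmt_2 (τ δ r : ℝ) (hτ : 0 < τ) (hτδ : τ < δ) (hr : 0 < r)
    (u f : ℝ → ℂ) (hu : ContDiff ℝ 3 u) (hf : Continuous f)
    (heq : ∀ t : ℝ,
      (τ : ℂ) * deriv (deriv (deriv u)) t + deriv (deriv u) t
        + ((r^2 : ℝ) : ℂ) * u t + (((δ + τ) * r^2 : ℝ) : ℂ) * deriv u t = f t)
    (E : ℝ → ℝ)
    (hE : E = fun t =>
      ‖(1/2 : ℂ) * deriv u t + (τ : ℂ) * deriv (deriv u) t‖^2
        + (τ / (δ + τ)) * r^2 * ‖u t + ((δ + τ : ℝ) : ℂ) * deriv u t‖^2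
        + ((δ - τ) / (2 * (δ + τ))) * r^2 * ‖u t‖^2
        + (1/4) * ‖deriv u t‖^2) :
    ∀ t : ℝ,
      (1/2) * deriv E t =
        -(τ/2) * ‖deriv (deriv u) t‖^2 - ((δ - τ)/2) * r^2 * ‖deriv u t‖^2
          + (f t * (starRingEnd ℂ)
              ((1/2 : ℂ) * deriv u t + (τ : ℂ) * deriv (deriv u) t)).re := by
  intro t
  -- smoothness chain
  have hu3 : ContDiff ℝ ((2:ℕ) + 1) u := by exact_mod_cast hu
  have hu2 : ContDiff ℝ ((1:ℕ) + 1) (deriv u) := by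
    exact_mod_cast (contDiff_succ_iff_deriv.mp hu3).2.2
  have hu1 : ContDiff ℝ ((0:ℕ) + 1) (deriv (deriv u)) := by
    exact_mod_cast (contDiff_succ_iff_deriv.mp hu2).2.2
  have h1 : HasDerivAt u (deriv u t) t :=
    ((hu3.differentiable (by norm_num)) t).hasDerivAt
  have h2 : HasDerivAt (deriv u) (deriv (deriv u) t) t :=
    ((hu2.differentiable (by norm_num)) t).hasDerivAt
  have h3 : HasDerivAt (deriv (deriv u)) (deriv (deriv (deriv u)) t) t :=
    ((hu1.differentiable (by norm_num)) t).hasDerivAt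
  set a := u t
  set b := deriv u t
  set c := deriv (deriv u) t
  set d := deriv (deriv (deriv u)) t
  -- derivative of E
  have hg1 : HasDerivAt (fun s => (1/2 : ℂ) * deriv u s + (τ : ℂ) * deriv (deriv u) s)
      ((1/2 : ℂ) * c + (τ : ℂ) * d) t := (h2.const_mul _).add (h3.const_mul _)
  have hg2 : HasDerivAt (fun s => u s + ((δ + τ : ℝ) : ℂ) * deriv u s)
      (b + ((δ + τ : ℝ) : ℂ) * c) t := h1.add (h2.const_mul _)
  have hD : HasDerivAt E
      (2 * (((1/2 : ℂ) * c + (τ : ℂ) * d) * (starRingEnd ℂ) ((1/2 : ℂ) * b + (τ : ℂ) * c)).re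
        + (τ / (δ + τ)) * r^2 *
          (2 * ((b + ((δ + τ : ℝ) : ℂ) * c) * (starRingEnd ℂ) (a + ((δ + τ : ℝ) : ℂ) * b)).re)
        + ((δ - τ) / (2 * (δ + τ))) * r^2 * (2 * (b * (starRingEnd ℂ) a).re)
        + (1/4) * (2 * (c * (starRingEnd ℂ) b).re)) t := by
    rw [hE]
    exact ((((hdnsq hg1).add ((hdnsq hg2).const_mul _)).add
      ((hdnsq h1).const_mul _)).add ((hdnsq h2).const_mul _))
  rw [hD.deriv]
  -- equation: extract real and imaginary parts
  have heqt := heq t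
  have e1 : τ * d.re + c.re + r^2 * a.re + (δ + τ) * r^2 * b.re = (f t).re := by
    have := congrArg Complex.re heqt
    simpa [Complex.add_re, Complex.mul_re, ← Complex.ofReal_pow, Complex.ofReal_re, Complex.ofReal_im] using this
  have e2 : τ * d.im + c.im + r^2 * a.im + (δ + τ) * r^2 * b.im = (f t).im := by
    have := congrArg Complex.im heqt
    simpa [Complex.add_im, Complex.mul_im, ← Complex.ofReal_pow, Complex.ofReal_re, Complex.ofReal_im] using this
  have hδτ : δ + τ ≠ 0 := by intro h; linarith
  have hdre : d.re = ((f t).re - c.re - r^2 * a.re - (δ + τ) * r^2 * b.re) / τ := by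
    field_simp; linarith
  have hdim : d.im = ((f t).im - c.im - r^2 * a.im - (δ + τ) * r^2 * b.im) / τ := by
    field_simp; linarith
  simp only [← Complex.normSq_eq_norm_sq, Complex.normSq_apply,
    Complex.mul_re, Complex.add_re, Complex.add_im, Complex.mul_im,
    Complex.conj_re, Complex.conj_im, Complex.ofReal_re, Complex.ofReal_im,
    Complex.one_re, Complex.one_im, Complex.div_re, Complex.div_im, Complex.re_ofNat, Complex.im_ofNat]
  rw [hdre, hdim]
  field_simp
  ring
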